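/- arXiv:2511.08774 — 2 statements merged into one kernel-verified Lean document; each statement's English description precedes it below -/
import Mathlib

section
/- Let a : U → ℝ^d be locally Lipschitz. Then for distinct ξ ≠ η ∈ ℝ^{d−1}, the characteristic curves s ↦ Φ(s, ξ) and s ↦ Φ(s, η) of x' = a(x) with initial conditions (0, ξ) and (0, η) have disjoint images: there exist no times s, t with Φ(s, ξ) = Φ(t, η). -/
open Set Filter Topology

/-- Sign of a function near a zero with positive derivative: positive on the right. -/
lemma aux_sign_right {f : ℝ → ℝ} {L x : ℝ} (hf : HasDerivAt f L x) (hx : f x = 0)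
    (hL : 0 < L) : ∀ᶠ u in 𝓝[>] x, 0 < f u := by
  have hs : Tendsto (slope f x) (𝓝[≠] x) (𝓝 L) := hasDerivAt_iff_tendsto_slope.1 hf
  have hev : ∀ᶠ u in 𝓝[≠] x, 0 < slope f x u := hs.eventually (eventually_gt_nhds hL)
  have hev' : ∀ᶠ u in 𝓝[>] x, 0 < slope f x u :=
    hev.filter_mono (nhdsWithin_mono x fun u hu => ne_of_gt hu)
  filter_upwards [hev', self_mem_nhdsWithin] with u hu hu'
  have hux : 0 < u - x := sub_pos.2 hu'
  have := mul_pos hu hux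
  rwa [slope_def_field, div_mul_cancel₀ _ (ne_of_gt hux), hx, sub_zero] at this

/-- Sign of a function near a zero with positive derivative: negative on the left. -/
lemma aux_sign_left {f : ℝ → ℝ} {L x : ℝ} (hf : HasDerivAt f L x) (hx : f x = 0)
    (hL : 0 < L) : ∀ᶠ u in 𝓝[<] x, f u < 0 := by
  have hs : Tendsto (slope f x) (𝓝[≠] x) (𝓝 L) := hasDerivAt_iff_tendsto_slope.1 hf
  have hev : ∀ᶠ u in 𝓝[≠] x, 0 < slope f x u := hs.eventually (eventually_gt_nhds hL)
  have hev' : ∀ᶠ u in 𝓝[<] x, 0 < slope f x u :=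
    hev.filter_mono (nhdsWithin_mono x fun u hu => ne_of_lt hu)
  filter_upwards [hev', self_mem_nhdsWithin] with u hu hu'
  have hux : u - x < 0 := sub_neg.2 hu'
  have := mul_neg_of_pos_of_neg hu hux
  rwa [slope_def_field, div_mul_cancel₀ _ (ne_of_lt hux), hx, sub_zero] at this

/-- A real function which vanishes at `0` and has positive derivative at each of its zeros
cannot vanish at a positive time. -/
lemma aux_no_return_pos (f f' : ℝ → ℝ) (hf : ∀ u, HasDerivAt f (f' u) u)
    (hpos : ∀ u, f u = 0 → 0 < f' u) (h0 : f 0 = 0) {c : ℝ} (hc : 0 < c) (hfc : f c = 0) :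
    False := by
  have hcont : Continuous f := by
    rw [continuous_iff_continuousAt]; exact fun u => (hf u).continuousAt
  -- f is positive just to the right of 0
  obtain ⟨ε, hε, hIoo⟩ := mem_nhdsGT_iff_exists_Ioo_subset.1
    (aux_sign_right (hf 0) h0 (hpos 0 h0))
  have hεpos : (0 : ℝ) < ε := hε
  have hεc : ε ≤ c := by
    by_contra hlt
    push_neg at hlt
    exact absurd hfc (ne_of_gt (hIoo ⟨hc, hlt⟩))
  set S : Set ℝ := Ici ε ∩ f ⁻¹' Iic 0 with hS
  have hSclosed : IsClosed S := isClosed_Ici.inter (isClosed_Iic.preimage hcont)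
  have hcS : c ∈ S := ⟨hεc, by simp [hfc]⟩
  have hSbdd : BddBelow S := ⟨ε, fun u hu => hu.1⟩
  set z := sInf S with hz
  have hzS : z ∈ S := hSclosed.csInf_mem ⟨c, hcS⟩ hSbdd
  have hzpos : 0 < z := lt_of_lt_of_le hεpos hzS.1
  -- f is positive on (0, z)
  have hlb : ∀ u, 0 < u → u < z → 0 < f u := by
    intro u hu huz
    rcases lt_or_ge u ε with h | h
    · exact hIoo ⟨hu, h⟩
    · by_contra hle
      push_neg at hle
      exact notMem_of_lt_csInf huz hSbdd ⟨h, hle⟩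
  -- hence f z ≥ 0, and f z ≤ 0 since z ∈ S, so f z = 0
  have hfz : f z = 0 := by
    refine le_antisymm hzS.2 ?_
    refine ge_of_tendsto ((hcont.tendsto z).mono_left (nhdsWithin_le_nhds : 𝓝[<] z ≤ 𝓝 z)) ?_
    filter_upwards [Ioo_mem_nhdsLT_of_mem (⟨hzpos, le_rfl⟩ : z ∈ Ioc 0 z)] with u hu
    exact (hlb u hu.1 hu.2).le
  -- but then f is negative just to the left of z, contradiction
  have hneg := aux_sign_left (hf z) hfz (hpos z hfz)
  have hpos' : ∀ᶠ u in 𝓝[<] z, 0 < f u := by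
    filter_upwards [Ioo_mem_nhdsLT_of_mem (⟨hzpos, le_rfl⟩ : z ∈ Ioc 0 z)] with u hu
    exact hlb u hu.1 hu.2
  obtain ⟨u, hu1, hu2⟩ := (hneg.and hpos').exists
  exact absurd hu2 (not_lt.2 hu1.le)

/-- Same with a nonzero time. -/
lemma aux_no_return (f f' : ℝ → ℝ) (hf : ∀ u, HasDerivAt f (f' u) u)
    (hpos : ∀ u, f u = 0 → 0 < f' u) (h0 : f 0 = 0) {c : ℝ} (hc : c ≠ 0) (hfc : f c = 0) :
    False := by
  rcases hc.lt_or_gt with h | h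
  · refine aux_no_return_pos (fun u => f (u + c)) (fun u => f' (u + c)) ?_ ?_ (by simpa using hfc)
      (c := -c) (by linarith) (by simpa using h0)
    · intro u
      simpa [Function.comp_def] using (hf (u + c)).comp u ((hasDerivAt_id u).add_const c)
    · intro u hu; exact hpos _ hu
  · exact aux_no_return_pos f f' hf hpos h0 h hfc

/-- Characteristic curves issued from distinct points of the hyperplane `{x₁ = 0}`
have disjoint images (with `a` locally Lipschitz and `a₁ > 0` on the hyperplane). -/
theorem stmt11 (d : ℕ)
    (a : (Fin (d+1) → ℝ) → (Fin (d+1) → ℝ))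
    (hlip : LocallyLipschitz a)
    (hpos : ∀ η : Fin d → ℝ, 0 < a (Fin.cons 0 η) 0)
    (ξ η : Fin d → ℝ) (hne : ξ ≠ η)
    (xξ xη : ℝ → Fin (d+1) → ℝ)
    (hxξ0 : xξ 0 = Fin.cons 0 ξ) (hxη0 : xη 0 = Fin.cons 0 η)
    (hxξ : ∀ s : ℝ, HasDerivAt xξ (a (xξ s)) s)
    (hxη : ∀ s : ℝ, HasDerivAt xη (a (xη s)) s) :
    ∀ s t : ℝ, xξ s ≠ xη t := by
  intro s t h
  set F : ℝ → Fin (d+1) → ℝ := fun u => xξ (s + u) with hFdef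
  set G : ℝ → Fin (d+1) → ℝ := fun u => xη (t + u) with hGdef
  have hF : ∀ u, HasDerivAt F (a (F u)) u := by
    intro u
    have := (hxξ (s + u)).scomp u ((hasDerivAt_const u s).add (hasDerivAt_id u))
    simpa [hFdef, Function.comp_def] using this
  have hG : ∀ u, HasDerivAt G (a (G u)) u := by
    intro u
    have := (hxη (t + u)).scomp u ((hasDerivAt_const u t).add (hasDerivAt_id u))
    simpa [hGdef, Function.comp_def] using this
  have hFc : Continuous F := by
    rw [continuous_iff_continuousAt]; exact fun u => (hF u).continuousAt
  have hGc : Continuous G := by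
    rw [continuous_iff_continuousAt]; exact fun u => (hG u).continuousAt
  -- by uniqueness of solutions, F = G everywhere
  set T : Set ℝ := {u | F u = G u} with hT
  have hTclosed : IsClosed T := isClosed_eq hFc hGc
  have hTopen : IsOpen T := by
    rw [isOpen_iff_mem_nhds]
    intro u₀ hu₀
    obtain ⟨K, V, hV, hKV⟩ := hlip (F u₀)
    have hVG : V ∈ 𝓝 (G u₀) := by rwa [← hu₀]
    have hfev : ∀ᶠ u in 𝓝 u₀, HasDerivAt F (a (F u)) u ∧ F u ∈ V := by
      filter_upwards [hFc.continuousAt.preimage_mem_nhds hV] with u hu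
      exact ⟨hF u, hu⟩
    have hgev : ∀ᶠ u in 𝓝 u₀, HasDerivAt G (a (G u)) u ∧ G u ∈ V := by
      filter_upwards [hGc.continuousAt.preimage_mem_nhds hVG] with u hu
      exact ⟨hG u, hu⟩
    exact ODE_solution_unique_of_eventually (v := fun _ x => a x) (s := fun _ => V)
      (Eventually.of_forall fun _ => hKV) hfev hgev hu₀
  have h0T : (0 : ℝ) ∈ T := by
    show F 0 = G 0
    simp only [hFdef, hGdef, add_zero]
    exact h
  have hTuniv : T = univ := (IsClopen.eq_univ ⟨hTclosed, hTopen⟩ ⟨0, h0T⟩)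
  have hkey : xξ 0 = xη (t - s) := by
    have h2 : (-s : ℝ) ∈ T := by rw [hTuniv]; trivial
    have h3 : xξ (s + -s) = xη (t + -s) := h2
    simpa [← sub_eq_add_neg] using h3
  set c : ℝ := t - s with hc
  have hcne : c ≠ 0 := by
    intro h0
    apply hne
    have : (Fin.cons 0 ξ : Fin (d+1) → ℝ) = Fin.cons 0 η := by
      rw [← hxξ0, hkey, h0, hxη0]
    funext i
    have := congrFun this i.succ
    simpa using this
  have hηc : xη c = Fin.cons 0 ξ := by rw [← hkey, hxξ0]
  -- the first coordinate of xη vanishes at 0 and at c ≠ 0, contradiction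
  refine aux_no_return (fun u => xη u 0) (fun u => a (xη u) 0) ?_ ?_ ?_ hcne ?_
  · intro u
    exact hasDerivAt_pi.1 (hxη u) 0
  · intro u hu
    have hu' : xη u 0 = 0 := hu
    have h1 : xη u = Fin.cons 0 (Fin.tail (xη u)) := by
      rw [← hu']; exact (Fin.cons_self_tail _).symm
    show 0 < a (xη u) 0
    rw [h1]; exact hpos _
  · show xη 0 0 = 0
    rw [hxη0]; simp
  · show xη c 0 = 0
    rw [hηc]; simp
end

section
/- Let a be globally P-Lipschitz on U ⊇ [−δ', ∞) × ℝ^{d−1} with a₁(0, ξ) ≥ α > 0 and |a(0,ξ)| ≤ β for all ξ. Set δ = (α/2)·min(1/P, ℓ) where ℓ is as in the local-existence estimate. Then a₁(x₁, η) > α/2 for all |x₁| < δ and all η ∈ ℝ^{d−1}; moreover every point (x₁, η) with x₁ ∈ (−δ, 0) lies on a characteristic curve issued from the hyperplane {0} × ℝ^{d−1}: there exist ξ ∈ ℝ^{d−1} and t₂ ∈ (0, ℓ) with Φ(−t₂, ξ) = (x₁, η). -/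
set_option maxHeartbeats 1000000

open Set Metric Filter

/-- Near the hyperplane, `a₁ > α/2`, and every point `(x₁, η)` with `x₁ ∈ (-δ, 0)` lies
on a characteristic curve issued from the hyperplane `{0} × ℝ^{d-1}`. -/
theorem stmt13 (d : ℕ) (P α β L : ℝ) (hP : 0 < P) (hα : 0 < α) (hβ : 0 < β) (hL : 0 < L)
    (a : (Fin (d+1) → ℝ) → (Fin (d+1) → ℝ))
    (hlip : LipschitzWith (Real.toNNReal P) a)
    (hαa : ∀ ξ : Fin d → ℝ, α ≤ a (Fin.cons 0 ξ) 0)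
    (hβa : ∀ ξ : Fin d → ℝ, ‖a (Fin.cons 0 ξ)‖ ≤ β)
    (ℓ δ : ℝ) (hℓ : ℓ = (1 / P) * Real.log (1 + L * P / β))
    (hδ : δ = (α / 2) * min (1 / P) ℓ)
    (Φ : ℝ → (Fin d → ℝ) → (Fin (d+1) → ℝ))
    (hΦ0 : ∀ ξ' : Fin d → ℝ, Φ 0 ξ' = Fin.cons 0 ξ')
    (hflow : ∀ (s : ℝ) (ξ' : Fin d → ℝ), HasDerivAt (fun t => Φ t ξ') (a (Φ s ξ')) s) :
    (∀ (x₁ : ℝ) (η : Fin d → ℝ), |x₁| < δ → α / 2 < a (Fin.cons x₁ η) 0) ∧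
    (∀ (x₁ : ℝ) (η : Fin d → ℝ), x₁ ∈ Set.Ioo (-δ) 0 →
      ∃ (ξ' : Fin d → ℝ) (t₂ : ℝ), 0 < t₂ ∧ t₂ < ℓ ∧ Φ (-t₂) ξ' = Fin.cons x₁ η) := by
  have hPc : ((Real.toNNReal P : NNReal) : ℝ) = P := Real.coe_toNNReal P hP.le
  have hPinv : P * (1 / P) = 1 := by field_simp
  have hPδ : P * δ ≤ α / 2 := by
    have hm := min_le_left (1 / P) ℓ
    rw [hδ]
    nlinarith [mul_nonneg (mul_nonneg hP.le (by linarith : (0:ℝ) ≤ α/2))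
      (sub_nonneg.mpr hm)]
  have hδℓ : 2 * δ ≤ α * ℓ := by
    have hm := min_le_right (1 / P) ℓ
    rw [hδ]
    nlinarith [mul_nonneg (by linarith : (0:ℝ) ≤ α/2) (sub_nonneg.mpr hm)]
  -- Part 1
  have key : ∀ (x₁ : ℝ) (η : Fin d → ℝ), |x₁| < δ → α / 2 < a (Fin.cons x₁ η) 0 := by
    intro x₁ η hx
    have hdist : dist (Fin.cons x₁ η : Fin (d+1) → ℝ) (Fin.cons 0 η) ≤ |x₁| := by
      refine (dist_pi_le_iff (abs_nonneg _)).mpr fun i => ?_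
      refine Fin.cases ?_ (fun j => ?_) i
      · simp [Real.dist_eq]
      · simp [Real.dist_eq]
    have h1 : dist (a (Fin.cons x₁ η)) (a (Fin.cons 0 η)) ≤ P * |x₁| := by
      have h := hlip.dist_le_mul (Fin.cons x₁ η) (Fin.cons 0 η)
      rw [hPc] at h
      exact h.trans (by nlinarith [abs_nonneg x₁])
    have h2 : |a (Fin.cons x₁ η) 0 - a (Fin.cons 0 η) 0| ≤ P * |x₁| := by
      calc |a (Fin.cons x₁ η) 0 - a (Fin.cons 0 η) 0|
          = dist (a (Fin.cons x₁ η) 0) (a (Fin.cons 0 η) 0) := (Real.dist_eq _ _).symm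
        _ ≤ dist (a (Fin.cons x₁ η)) (a (Fin.cons 0 η)) := dist_le_pi_dist _ _ 0
        _ ≤ P * |x₁| := h1
    have h3 := hαa η
    have h4 := (abs_le.mp h2).1
    have h5 : P * |x₁| < P * δ := by nlinarith [abs_nonneg x₁]
    linarith
  refine ⟨key, ?_⟩
  -- Part 2
  intro x₁ η hx
  obtain ⟨hx1, hx2⟩ := hx
  have hδpos : 0 < δ := by linarith
  set T : ℝ := 2 * (-x₁) / α with hT
  have hTpos : 0 < T := div_pos (by linarith) hα
  have hTα : T * α = 2 * (-x₁) := by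
    rw [hT]; field_simp
  have hPT : P * T < 1 := by
    have h5 : P * T * α < α := by nlinarith [mul_pos hP hδpos]
    nlinarith
  have hTℓ : T < ℓ := by nlinarith
  set x₀ : Fin (d+1) → ℝ := Fin.cons x₁ η with hx₀
  set M : ℝ := ‖a x₀‖ with hM
  have hMnn : 0 ≤ M := norm_nonneg _
  have hden : 0 < 1 - P * T := by linarith
  set R : ℝ := M * T / (1 - P * T) with hR
  have hRnn : 0 ≤ R := div_nonneg (mul_nonneg hMnn hTpos.le) hden.le
  set C : ℝ := M + P * R with hC
  have hCnn : 0 ≤ C := add_nonneg hMnn (mul_nonneg hP.le hRnn)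
  have hpl : IsPicardLindelof (fun (_ : ℝ) x => a x) (tmin := 0) (tmax := T)
      ⟨0, ⟨le_refl 0, hTpos.le⟩⟩ x₀ ⟨R, hRnn⟩ 0 ⟨C, hCnn⟩ (Real.toNNReal P) :=
    { lipschitzOnWith := fun _ _ => hlip.lipschitzOnWith
      continuousOn := fun _ _ => continuousOn_const
      norm_le := by
        intro t _ x hxB
        show ‖a x‖ ≤ C
        have hd : dist x x₀ ≤ R := mem_closedBall.mp hxB
        have h := hlip.dist_le_mul x x₀
        rw [hPc] at h
        have h1 : dist (a x) (a x₀) ≤ P * R := h.trans (by nlinarith)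
        have h2 := norm_sub_norm_le (a x) (a x₀)
        rw [← dist_eq_norm] at h2
        simp only [hC]
        linarith
      mul_max_le := by
        show C * max (T - 0) (0 - 0) ≤ R - ((0 : NNReal) : ℝ)
        rw [NNReal.coe_zero]
        have hmax : max (T - 0) (0 - 0) = T := by
          rw [sub_zero, sub_zero]; exact max_eq_left hTpos.le
        rw [hmax]
        have hRe : R * (1 - P * T) = M * T := by
          rw [hR, div_mul_cancel₀ _ hden.ne']
        nlinarith }
  obtain ⟨ψ, hψ0, hψ⟩ := hpl.exists_eq_forall_mem_Icc_hasDerivWithinAt₀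
  have hψ0 : ψ 0 = x₀ := hψ0
  have hψ0' : ψ 0 0 = x₁ := by rw [hψ0, hx₀]; simp
  have hfc : ContinuousOn ψ (Icc 0 T) := fun t ht => (hψ t ht).continuousWithinAt
  have hfc0 : ContinuousOn (fun s => ψ s 0) (Icc 0 T) :=
    (continuous_apply (0 : Fin (d+1))).comp_continuousOn hfc
  have hf' : ∀ t ∈ Icc (0:ℝ) T, HasDerivWithinAt (fun s => ψ s 0) (a (ψ t) 0) (Icc 0 T) t := by
    intro t ht
    have h := (ContinuousLinearMap.proj (R := ℝ) (φ := fun _ : Fin (d+1) => ℝ)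
      0).hasFDerivAt.comp_hasDerivWithinAt t (hψ t ht)
    exact h
  -- the first coordinate hits 0
  have hexists : ∃ t₂ ∈ Icc (0:ℝ) T, ψ t₂ 0 = 0 := by
    by_contra h
    push_neg at h
    have hneg : ∀ t ∈ Icc (0:ℝ) T, ψ t 0 < 0 := by
      intro t ht
      rcases lt_or_gt_of_ne (h t ht) with h' | h'
      · exact h'
      · exfalso
        have hsub : Icc (0:ℝ) t ⊆ Icc 0 T := Icc_subset_Icc le_rfl ht.2
        have h0mem : (0:ℝ) ∈ Icc (ψ 0 0) (ψ t 0) := ⟨by rw [hψ0']; linarith, h'.le⟩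
        obtain ⟨s, hs, hs0⟩ := intermediate_value_Icc ht.1 (hfc0.mono hsub) h0mem
        exact h s (hsub hs) hs0
    set S : Set ℝ := Icc 0 T ∩ (fun t => ψ t 0 - (x₁ + α / 2 * t)) ⁻¹' Ici 0 with hS
    have hSsub : Icc (0:ℝ) T ⊆ S := by
      apply IsClosed.Icc_subset_of_forall_mem_nhdsWithin
      · have hcl : IsClosed S := by
          apply ContinuousOn.preimage_isClosed_of_isClosed ?_ isClosed_Icc isClosed_Ici
          exact hfc0.sub (continuousOn_const.add (continuousOn_const.mul continuousOn_id))
        rwa [inter_eq_left.mpr (inter_subset_left)]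
      · refine ⟨left_mem_Icc.mpr hTpos.le, ?_⟩
        simp only [mem_preimage, mem_Ici, hψ0']
        simp
      · rintro x ⟨⟨hxIcc, hxineq⟩, hxIco⟩
        simp only [mem_preimage, mem_Ici, sub_nonneg] at hxineq
        have hfx_neg : ψ x 0 < 0 := hneg x hxIcc
        have hax : 0 ≤ α / 2 * x := mul_nonneg (by linarith : (0:ℝ) ≤ α/2) hxIco.1
        have habs : |ψ x 0| < δ := abs_lt.mpr ⟨by linarith, by linarith⟩
        have hworth : α / 2 < a (ψ x) 0 := by
          have hk := key (ψ x 0) (Fin.tail (ψ x)) habs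
          rwa [Fin.cons_self_tail] at hk
        have hder := hf' x hxIcc
        rw [hasDerivWithinAt_iff_tendsto_slope] at hder
        have hev : ∀ᶠ y in nhdsWithin x (Icc 0 T \ {x}), α / 2 < slope (fun s => ψ s 0) x y :=
          hder.eventually (eventually_gt_nhds hworth)
        have hxT : x < T := hxIco.2
        have hmem : Ioc x T ∈ nhdsWithin x (Ioi x) := Ioc_mem_nhdsGT_of_mem ⟨le_rfl, hxT⟩
        have hle : nhdsWithin x (Ioi x) ≤ nhdsWithin x (Icc 0 T \ {x}) := by
          rw [← nhdsWithin_Ioc_eq_nhdsGT hxT]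
          exact nhdsWithin_mono _ (fun y hy =>
            ⟨⟨le_trans hxIco.1 hy.1.le, hy.2⟩, by simp [ne_of_gt hy.1]⟩)
        have hev' := hev.filter_mono hle
        filter_upwards [hmem, hev'] with y hy hsl
        refine ⟨⟨le_trans hxIco.1 hy.1.le, hy.2⟩, ?_⟩
        simp only [mem_preimage, mem_Ici, sub_nonneg]
        rw [slope_def_field] at hsl
        have hyx : 0 < y - x := sub_pos.mpr hy.1
        rw [lt_div_iff₀ hyx] at hsl
        nlinarith
    have hT0 : x₁ + α / 2 * T = 0 := by
      linear_combination hTα / 2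
    have hTS := hSsub (right_mem_Icc.mpr hTpos.le)
    obtain ⟨-, h2⟩ := hTS
    simp only [mem_preimage, mem_Ici, sub_nonneg] at h2
    have := hneg T (right_mem_Icc.mpr hTpos.le)
    linarith
  obtain ⟨t₂, ht₂mem, ht₂0⟩ := hexists
  have ht₂pos : 0 < t₂ := by
    rcases eq_or_lt_of_le ht₂mem.1 with h | h
    · exfalso; rw [← h] at ht₂0; rw [hψ0'] at ht₂0; linarith
    · exact h
  have ht₂ℓ : t₂ < ℓ := lt_of_le_of_lt ht₂mem.2 hTℓ
  have hcons : ψ t₂ = Fin.cons 0 (Fin.tail (ψ t₂)) := by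
    have h := Fin.cons_self_tail (ψ t₂)
    rw [ht₂0] at h
    exact h.symm
  refine ⟨Fin.tail (ψ t₂), t₂, ht₂pos, ht₂ℓ, ?_⟩
  set g : ℝ → (Fin (d+1) → ℝ) := fun t => Φ (t - t₂) (Fin.tail (ψ t₂)) with hg
  have hgder : ∀ t, HasDerivAt g (a (g t)) t := by
    intro t
    have h1 := hflow (t - t₂) (Fin.tail (ψ t₂))
    have h2 : HasDerivAt (fun s : ℝ => s - t₂) 1 t := (hasDerivAt_id t).sub_const t₂
    have h3 := h1.scomp t h2
    rw [one_smul] at h3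
    exact h3
  have hequ : EqOn ψ g (Icc 0 t₂) := by
    apply ODE_solution_unique_of_mem_Icc_left
      (v := fun (_ : ℝ) x => a x) (s := fun _ => (univ : Set (Fin (d+1) → ℝ)))
      (K := Real.toNNReal P) (fun _ _ => hlip.lipschitzOnWith)
    · exact hfc.mono (Icc_subset_Icc le_rfl ht₂mem.2)
    · intro t ht
      have h1 := hψ t ⟨ht.1.le, ht.2.trans ht₂mem.2⟩
      apply h1.mono_of_mem_nhdsWithin
      rw [mem_nhdsWithin]
      exact ⟨Ioi 0, isOpen_Ioi, ht.1,
        fun y hy => ⟨hy.1.le, le_trans hy.2 (ht.2.trans ht₂mem.2)⟩⟩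
    · exact fun _ _ => mem_univ _
    · exact fun t _ => (hgder t).continuousAt.continuousWithinAt
    · exact fun t _ => (hgder t).hasDerivWithinAt
    · exact fun _ _ => mem_univ _
    · show ψ t₂ = g t₂
      rw [hg]
      simp only [sub_self, hΦ0]
      exact hcons
  have h0 := hequ (left_mem_Icc.mpr ht₂pos.le)
  have hgev : Φ (-t₂) (Fin.tail (ψ t₂)) = g 0 := by rw [hg]; norm_num
  rw [hgev, ← h0, hψ0]
end
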